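/- The margin Φ_{x,x̃}(p_A, c_A) = ρ̲_{x,x̃}(p_A, c_A) − ρ̄_{x,x̃}(p_B, c_B) is invariant under any permutation π of [N] that preserves each region C_i and fixes the per-region disagreement counts; consequently Φ_{x,x̃} depends on x̃ only through the vector (‖x_{C_i} − x̃_{C_i}‖_0)_{i=1}^C. -/

import Mathlib

/-- Probability `P(φ(x) = z)` for the anisotropic flip channel with region map `c` and
flip probabilities `p`. -/
noncomputable def flipP {N C : ℕ} (c : Fin N → Fin C) (p : Fin C → ℝ)
    (x : Fin N → Bool) (z : Fin N → Bool) : ℝ :=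
  ∏ k, if z k = x k then 1 - p (c k) else p (c k)

/-- `P(h(φ(x)) = y)` for a classifier `h`. -/
noncomputable def classProb {N : ℕ} {Y : Type} [DecidableEq Y]
    (P : (Fin N → Bool) → ℝ) (h : (Fin N → Bool) → Y) (y : Y) : ℝ :=
  ∑ z, P z * (if h z = y then 1 else 0)

/-- The margin `Φ_{x,x̃}(p_A, c_A) = ρ̲_{x,x̃}(p_A, c_A) - ρ̄_{x,x̃}(p_B, c_B)` of the
Lee et al. framework. -/
noncomputable def Phi {N C : ℕ} (c : Fin N → Fin C) (p : Fin C → ℝ) {Y : Type}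
    [DecidableEq Y] (x xt : Fin N → Bool) (pA pB : ℝ) (cA cB : Y) : ℝ :=
  sInf {q : ℝ | ∃ h : (Fin N → Bool) → Y,
      classProb (flipP c p x) h cA = pA ∧ q = classProb (flipP c p xt) h cA} -
  sSup {q : ℝ | ∃ h : (Fin N → Bool) → Y,
      classProb (flipP c p x) h cB = pB ∧ q = classProb (flipP c p xt) h cB}



lemma bool_aux (a b m : Bool) : (a = xor b m) = (xor a m = b) := by
  cases a <;> cases b <;> cases m <;> simp

def xorEquiv {N : ℕ} (ρ : Equiv.Perm (Fin N)) (m : Fin N → Bool) :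
    (Fin N → Bool) ≃ (Fin N → Bool) where
  toFun z k := xor (z (ρ k)) (m k)
  invFun w k := xor (w (ρ.symm k)) (m (ρ.symm k))
  left_inv z := by funext k; simp [Bool.xor_assoc]
  right_inv w := by funext k; simp [Bool.xor_assoc]

lemma classProb_comp {N : ℕ} {Y : Type} [DecidableEq Y] (P : (Fin N → Bool) → ℝ)
    (σ : (Fin N → Bool) ≃ (Fin N → Bool)) (h : (Fin N → Bool) → Y) (y : Y) :
    classProb (P ∘ σ) h y = classProb P (h ∘ σ.symm) y := by
  unfold classProb
  exact Fintype.sum_equiv σ _ _ (fun z => by simp)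

lemma exists_perm {α β : Type*} [Fintype α] [DecidableEq α] [DecidableEq β] (F G : α → β)
    (h : ∀ v, (Finset.univ.filter (fun a => F a = v)).card
            = (Finset.univ.filter (fun a => G a = v)).card) :
    ∃ π : Equiv.Perm α, ∀ a, G (π a) = F a := by
  have e : ∀ v : β, {a // F a = v} ≃ {a // G a = v} := fun v =>
    Fintype.equivOfCardEq (by
      rw [Fintype.card_subtype, Fintype.card_subtype]; exact h v)
  refine ⟨(Equiv.sigmaFiberEquiv F).symm.trans
    ((Equiv.sigmaCongrRight e).trans (Equiv.sigmaFiberEquiv G)), fun a => ?_⟩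
  exact (e (F a) ⟨a, rfl⟩).2

lemma flipP_eq {N C : ℕ} (c : Fin N → Fin C) (p : Fin C → ℝ)
    (ρ : Equiv.Perm (Fin N)) (hc : ∀ k, c (ρ k) = c k) (m x x' : Fin N → Bool)
    (hx : ∀ k, xor (x k) (m k) = x' (ρ k)) :
    flipP c p x' = flipP c p x ∘ (xorEquiv ρ m) := by
  funext z
  show flipP c p x' z = flipP c p x (fun k => xor (z (ρ k)) (m k))
  unfold flipP
  rw [← Equiv.prod_comp ρ (fun k => if z k = x' k then 1 - p (c k) else p (c k))]
  refine Finset.prod_congr rfl fun k _ => ?_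
  have h1 : (z (ρ k) = x' (ρ k)) = (xor (z (ρ k)) (m k) = x k) := by
    rw [← hx k, bool_aux]
  rw [hc k]; simp only [h1]

lemma set_eq {N : ℕ} {Y : Type} [DecidableEq Y] (P Q P' Q' : (Fin N → Bool) → ℝ)
    (σ : (Fin N → Bool) ≃ (Fin N → Bool)) (hP : P' = P ∘ σ) (hQ : Q' = Q ∘ σ)
    (y : Y) (r : ℝ) :
    {q : ℝ | ∃ h : (Fin N → Bool) → Y, classProb P' h y = r ∧ q = classProb Q' h y} =
    {q : ℝ | ∃ h : (Fin N → Bool) → Y, classProb P h y = r ∧ q = classProb Q h y} := by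
  subst hP hQ
  ext q
  constructor
  · rintro ⟨h, h1, rfl⟩
    exact ⟨h ∘ σ.symm, (classProb_comp P σ h y).symm.trans h1,
      (classProb_comp Q σ h y)⟩
  · rintro ⟨h, h1, rfl⟩
    have hcomp : (h ∘ σ) ∘ σ.symm = h := by funext a; simp
    refine ⟨h ∘ σ, ?_, ?_⟩
    · rw [classProb_comp, hcomp]; exact h1
    · rw [classProb_comp, hcomp]

lemma Phi_comp {N C : ℕ} (c : Fin N → Fin C) (p : Fin C → ℝ) {Y : Type}
    [DecidableEq Y] (x xt x' xt' : Fin N → Bool) (pA pB : ℝ) (cA cB : Y)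
    (σ : (Fin N → Bool) ≃ (Fin N → Bool))
    (hx : flipP c p x' = flipP c p x ∘ σ) (hxt : flipP c p xt' = flipP c p xt ∘ σ) :
    Phi c p x' xt' pA pB cA cB = Phi c p x xt pA pB cA cB := by
  unfold Phi
  rw [set_eq _ _ _ _ σ hx hxt cA pA, set_eq _ _ _ _ σ hx hxt cB pB]

lemma count_true {N C : ℕ} (c : Fin N → Fin C) (i : Fin C) (u w : Fin N → Bool) :
    (Finset.univ.filter (fun k => (c k, xor (u k) (w k)) = (i, true))).card =
    (Finset.univ.filter (fun k => c k = i ∧ u k ≠ w k)).card := by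
  congr 1
  apply Finset.filter_congr
  intro k _
  constructor
  · intro h
    have h1 := (Prod.ext_iff.1 h).1
    have h2 := (Prod.ext_iff.1 h).2
    refine ⟨h1, ?_⟩
    revert h2; cases u k <;> cases w k <;> simp
  · rintro ⟨h1, h2⟩
    have : xor (u k) (w k) = true := by
      revert h2; cases u k <;> cases w k <;> simp
    rw [h1, this]

lemma count_split {N C : ℕ} (c : Fin N → Fin C) (i : Fin C) (v : Fin N → Bool) :
    (Finset.univ.filter (fun k => (c k, v k) = (i, true))).card +
    (Finset.univ.filter (fun k => (c k, v k) = (i, false))).card =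
    (Finset.univ.filter (fun k => c k = i)).card := by
  classical
  have h := Finset.card_filter_add_card_filter_not
    (s := Finset.univ.filter (fun k : Fin N => c k = i)) (p := fun k => v k = true)
  rw [Finset.filter_filter, Finset.filter_filter] at h
  have e1 : Finset.univ.filter (fun k => c k = i ∧ v k = true) =
      Finset.univ.filter (fun k => (c k, v k) = (i, true)) := by
    apply Finset.filter_congr; intro k _; simp [Prod.ext_iff]
  have e2 : Finset.univ.filter (fun k => c k = i ∧ ¬ v k = true) =
      Finset.univ.filter (fun k => (c k, v k) = (i, false)) := by
    apply Finset.filter_congr; intro k _; simp [Prod.ext_iff]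
  rw [e1, e2] at h
  exact h

/-- The margin `Φ_{x,x̃}` is invariant under any permutation of coordinates preserving each
region `C_i` (applied simultaneously to `x` and `x̃`, which fixes the per-region disagreement
counts); consequently `Φ_{x,x̃}` depends on `x̃` only through the vector of per-region
Hamming distances `(‖x_{C_i} - x̃_{C_i}‖₀)_i`. -/
theorem stmt_16 (N C : ℕ) (c : Fin N → Fin C) (p : Fin C → ℝ)
    (hp : ∀ i, 0 < p i ∧ p i < 1) (Y : Type) [DecidableEq Y]
    (x xt : Fin N → Bool) (pA pB : ℝ) (cA cB : Y) :
    (∀ π : Equiv.Perm (Fin N), (∀ k, c (π k) = c k) →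
      Phi c p (x ∘ π) (xt ∘ π) pA pB cA cB = Phi c p x xt pA pB cA cB) ∧
    (∀ xt' : Fin N → Bool,
      (∀ i, (Finset.univ.filter (fun k => c k = i ∧ x k ≠ xt k)).card =
            (Finset.univ.filter (fun k => c k = i ∧ x k ≠ xt' k)).card) →
      Phi c p x xt pA pB cA cB = Phi c p x xt' pA pB cA cB) := by
  constructor
  · intro π hc
    have hc' : ∀ k, c (π.symm k) = c k := by
      intro k
      have := hc (π.symm k)
      rw [Equiv.apply_symm_apply] at this; exact this.symm
    refine Phi_comp c p x xt (x ∘ π) (xt ∘ π) pA pB cA cB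
      (xorEquiv π.symm (fun _ => false)) ?_ ?_
    · exact flipP_eq c p π.symm hc' _ x (x ∘ π) (fun k => by simp)
    · exact flipP_eq c p π.symm hc' _ xt (xt ∘ π) (fun k => by simp)
  · intro xt' hcnt
    have hcounts : ∀ v : Fin C × Bool,
        (Finset.univ.filter (fun k => (c k, xor (x k) (xt k)) = v)).card =
        (Finset.univ.filter (fun k => (c k, xor (x k) (xt' k)) = v)).card := by
      rintro ⟨i, b⟩
      have t1 := count_true c i x xt
      have t2 := count_true c i x xt'
      have s1 := count_split c i (fun k => xor (x k) (xt k))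
      have s2 := count_split c i (fun k => xor (x k) (xt' k))
      have h0 := hcnt i
      cases b
      · omega
      · rw [t1, t2]; exact hcnt i
    obtain ⟨π, hπ⟩ := exists_perm (fun k => (c k, xor (x k) (xt k)))
      (fun k => (c k, xor (x k) (xt' k))) hcounts
    have hcπ : ∀ a, c (π a) = c a := fun a => (Prod.ext_iff.1 (hπ a)).1
    have hdπ : ∀ a, xor (x (π a)) (xt' (π a)) = xor (x a) (xt a) :=
      fun a => (Prod.ext_iff.1 (hπ a)).2
    refine (Phi_comp c p x xt x xt' pA pB cA cB
      (xorEquiv π (fun k => xor (x k) (x (π k)))) ?_ ?_).symm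
    · refine flipP_eq c p π hcπ _ x x fun k => ?_
      cases x k <;> cases x (π k) <;> simp
    · refine flipP_eq c p π hcπ _ xt xt' fun k => ?_
      have h := hdπ k
      revert h
      cases x k <;> cases xt k <;> cases x (π k) <;> cases xt' (π k) <;> simp
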